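/- Let (G,H,K) be a loop folder in which K is a twisted subgroup. Suppose λ is an element of G (or of G extended by the inverting automorphism) of order dividing 2 such that for all k ∈ K, λkλ ∈ Λ where Λ = λK is G-invariant, and suppose KK ∩ H = {1}. If h ∈ H, g ∈ G, and (h^g)^λ = (h^g)⁻¹, then h² = 1. -/

import Mathlib

/-- Let `(G,H,K)` be a loop folder with `K` a twisted subgroup,
all inside an ambient group `P` (`P` models `G` possibly extended by the
inverting automorphism). Suppose `l ∈ P` has order dividing `2`, `l k l ∈ Λ`
for all `k ∈ K` where `Λ = lK` is invariant under `G`-conjugation, and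
`KK ∩ H = {1}`. If `h ∈ H`, `g ∈ G` and `l` inverts `h^g = g⁻¹ h g`, then
`h² = 1`. -/
theorem square_trivial_of_lambda_inverts {P : Type*} [Group P] [Finite P]
    (G H : Subgroup P) (hHG : H ≤ G) (K : Set P) (hKG : K ⊆ (G : Set P))
    -- loop folder: `K` is a transversal to every conjugate of `H` in `G`, `1 ∈ K`
    (h1 : (1 : P) ∈ K)
    (htrans : ∀ u ∈ G, ∀ g ∈ G,
      ∃! k, k ∈ K ∧ ∃ h ∈ H, g = u⁻¹ * h * u * k)
    -- `K` is a twisted subgroup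
    (hKinv : ∀ x ∈ K, x⁻¹ ∈ K) (hKtw : ∀ x ∈ K, ∀ y ∈ K, x * y * x ∈ K)
    -- the element `l` of order dividing 2
    (l : P) (hl : l ^ 2 = 1)
    (hlK : ∀ k ∈ K, l * k * l ∈ (fun x => l * x) '' K)
    -- `Λ = lK` is `G`-invariant
    (hLambda : ∀ g ∈ G, ∀ k ∈ K, g⁻¹ * (l * k) * g ∈ (fun x => l * x) '' K)
    -- `KK ∩ H = {1}`
    (hKKH : ∀ k₁ ∈ K, ∀ k₂ ∈ K, k₁ * k₂ ∈ H → k₁ * k₂ = 1) :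
    ∀ h ∈ H, ∀ g ∈ G, l * (g⁻¹ * h * g) * l = (g⁻¹ * h * g)⁻¹ → h ^ 2 = 1 := by
  intro h hh g hg hinv
  set x : P := g⁻¹ * h * g with hx
  have hxG : x ∈ G := by
    exact mul_mem (mul_mem (inv_mem hg) (hHG hh)) hg
  have hll : l * l = 1 := by rw [← sq]; exact hl
  -- x⁻¹ l x = l k for some k ∈ K
  obtain ⟨k, hk, hkeq⟩ := hLambda x hxG 1 h1
  simp only [mul_one] at hkeq
  -- k = x²
  have hkx : k = x * x := by
    have h1' : x⁻¹ = l * x * l := hinv.symm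
    have : l * k = x⁻¹ * l * x := by exact hkeq
    rw [h1'] at this
    have : l * k = l * (x * (l * l) * x) := by
      rw [this]; group
    have := mul_left_cancel this
    rw [hll, mul_one] at this
    exact this
  have hx2K : x * x ∈ K := hkx ▸ hk
  have hx2G : x * x ∈ G := mul_mem hxG hxG
  obtain ⟨k₀, _, huniq⟩ := htrans g hg (x * x) hx2G
  have e1 : k₀ = x * x := by
    apply (huniq (x * x) ⟨hx2K, 1, one_mem H, by group⟩).symm
  have e2 : k₀ = 1 := by
    apply (huniq 1 ⟨h1, h * h, mul_mem hh hh, by rw [hx]; group⟩).symm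
  have hxx : x * x = 1 := by rw [← e1, e2]
  have : g⁻¹ * (h * h) * g = 1 := by
    have : g⁻¹ * (h * h) * g = x * x := by rw [hx]; group
    rw [this, hxx]
  have hhh : h * h = 1 := by
    have := congrArg (fun z => g * z * g⁻¹) this
    simpa [mul_assoc] using this
  rw [sq]; exact hhh
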